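/- For a < b with b - a < 2π, the space U = span{1, x, cos x, sin x} restricted to [a,b] satisfies: every nonzero element of DU = span{1, cos x, sin x} has at most 2 zeros in [a,b] counted with multiplicities (up to 3); i.e., DU is a 3-dimensional EC-space on [a,b]. -/

import Mathlib

def VanishesTo (F : ℝ → ℝ) (x : ℝ) (μ : ℕ) : Prop :=
  ∀ r < μ, iteratedDeriv r F x = 0

def AtMostZeros (m : ℕ) (I : Set ℝ) (F : ℝ → ℝ) : Prop :=
  ∀ (h : ℕ) (τ : Fin h → ℝ) (μ : Fin h → ℕ),
    Function.Injective τ → (∀ j, τ j ∈ I) → (∀ j, 1 ≤ μ j ∧ μ j ≤ m) →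
    (∑ j, μ j) = m → ¬ (∀ j, VanishesTo F (τ j) (μ j))

private lemma aux_cos_lt_one (t : ℝ) (h0 : t ≠ 0) (h2 : |t| < 2*Real.pi) : Real.cos t < 1 := by
  have key : ∀ s : ℝ, 0 < s → s < 2*Real.pi → Real.cos s < 1 := by
    intro s hs hs2
    have hs' : 0 < Real.sin (s/2) := Real.sin_pos_of_pos_of_lt_pi (by linarith) (by linarith)
    have h2m := Real.cos_two_mul (s/2)
    rw [show 2*(s/2) = s by ring] at h2m
    have hp := Real.sin_sq_add_cos_sq (s/2)
    nlinarith [mul_pos hs' hs']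
  rcases lt_trichotomy t 0 with h|h|h
  · have := key (-t) (by linarith) (by rw [abs_of_neg h] at h2; linarith)
    rwa [Real.cos_neg] at this
  · exact absurd h h0
  · exact key t h (by rwa [abs_of_pos h] at h2)

private lemma aux_sin_id (a b : ℝ) :
    Real.sin (2*a) + Real.sin (2*b) - Real.sin (2*(a+b)) =
    4 * Real.sin a * Real.sin b * Real.sin (a+b) := by
  rw [Real.sin_two_mul, Real.sin_two_mul, Real.sin_two_mul, Real.sin_add, Real.cos_add]
  have pa := Real.sin_sq_add_cos_sq a
  have pb := Real.sin_sq_add_cos_sq b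
  linear_combination (-2*Real.sin a*Real.cos a) * pb + (-2*Real.sin b*Real.cos b) * pa

private lemma L1 (c₀ c₁ c₂ x : ℝ)
    (e1 : c₀ + c₁*Real.cos x + c₂*Real.sin x = 0)
    (e2 : -(c₁*Real.sin x) + c₂*Real.cos x = 0)
    (e3 : -(c₁*Real.cos x) - c₂*Real.sin x = 0) :
    c₀ = 0 ∧ c₁ = 0 ∧ c₂ = 0 := by
  have p := Real.sin_sq_add_cos_sq x
  refine ⟨by linarith [e1, e3], ?_, ?_⟩
  · linear_combination -c₁ * p - Real.sin x * e2 - Real.cos x * e3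
  · linear_combination -c₂ * p + Real.cos x * e2 - Real.sin x * e3

private lemma L2 (c₀ c₁ c₂ x y : ℝ) (hxy : x ≠ y) (hd : |y - x| < 2*Real.pi)
    (e1 : c₀ + c₁*Real.cos x + c₂*Real.sin x = 0)
    (e2 : -(c₁*Real.sin x) + c₂*Real.cos x = 0)
    (e3 : c₀ + c₁*Real.cos y + c₂*Real.sin y = 0) :
    c₀ = 0 ∧ c₁ = 0 ∧ c₂ = 0 := by
  have hcos : Real.cos (y - x) < 1 :=
    aux_cos_lt_one _ (fun h => hxy (by linarith [sub_eq_zero.mp h])) hd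
  rw [Real.cos_sub] at hcos
  have p := Real.sin_sq_add_cos_sq x
  set D : ℝ := Real.cos y * Real.cos x + Real.sin y * Real.sin x - 1 with hD
  have hDne : D ≠ 0 := by simp only [hD]; intro h; nlinarith
  have eA : c₁*(Real.cos y - Real.cos x) + c₂*(Real.sin y - Real.sin x) = 0 := by linarith
  have h1 : c₁ * D = 0 := by
    simp only [hD]
    linear_combination Real.cos x * eA - (Real.sin y - Real.sin x) * e2 + c₁ * p
  have h2 : c₂ * D = 0 := by
    simp only [hD]
    linear_combination Real.sin x * eA + (Real.cos y - Real.cos x) * e2 + c₂ * p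
  have hc1 : c₁ = 0 := by rcases mul_eq_zero.mp h1 with h|h; exact h; exact absurd h hDne
  have hc2 : c₂ = 0 := by rcases mul_eq_zero.mp h2 with h|h; exact h; exact absurd h hDne
  refine ⟨?_, hc1, hc2⟩
  rw [hc1, hc2] at e1; linarith

private lemma L3 (c₀ c₁ c₂ x y z : ℝ) (hxy : x < y) (hyz : y < z) (hzx : z - x < 2*Real.pi)
    (e1 : c₀ + c₁*Real.cos x + c₂*Real.sin x = 0)
    (e2 : c₀ + c₁*Real.cos y + c₂*Real.sin y = 0)
    (e3 : c₀ + c₁*Real.cos z + c₂*Real.sin z = 0) :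
    c₀ = 0 ∧ c₁ = 0 ∧ c₂ = 0 := by
  have hid := aux_sin_id ((y-x)/2) ((z-y)/2)
  rw [show 2*((y-x)/2) = y - x by ring, show 2*((z-y)/2) = z - y by ring,
      show 2*((y-x)/2 + (z-y)/2) = z - x by ring,
      show (y-x)/2 + (z-y)/2 = (z-x)/2 by ring] at hid
  have pi_pos := Real.pi_pos
  have s1 : 0 < Real.sin ((y-x)/2) := Real.sin_pos_of_pos_of_lt_pi (by linarith) (by linarith)
  have s2 : 0 < Real.sin ((z-y)/2) := Real.sin_pos_of_pos_of_lt_pi (by linarith) (by linarith)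
  have s3 : 0 < Real.sin ((z-x)/2) := Real.sin_pos_of_pos_of_lt_pi (by linarith) (by linarith)
  have hDpos : 0 < Real.sin (y-x) + Real.sin (z-y) - Real.sin (z-x) := by
    rw [hid]; positivity
  rw [Real.sin_sub, Real.sin_sub, Real.sin_sub] at hDpos
  set D : ℝ := (Real.sin y * Real.cos x - Real.cos y * Real.sin x) +
      (Real.sin z * Real.cos y - Real.cos z * Real.sin y) -
      (Real.sin z * Real.cos x - Real.cos z * Real.sin x) with hD
  have hDne : D ≠ 0 := ne_of_gt hDpos
  have eA : c₁*(Real.cos y - Real.cos x) + c₂*(Real.sin y - Real.sin x) = 0 := by linarith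
  have eB : c₁*(Real.cos z - Real.cos x) + c₂*(Real.sin z - Real.sin x) = 0 := by linarith
  have h1 : c₁ * D = 0 := by
    simp only [hD]
    linear_combination (Real.sin z - Real.sin x) * eA - (Real.sin y - Real.sin x) * eB
  have h2 : c₂ * D = 0 := by
    simp only [hD]
    linear_combination (Real.cos y - Real.cos x) * eB - (Real.cos z - Real.cos x) * eA
  have hc1 : c₁ = 0 := by rcases mul_eq_zero.mp h1 with h|h; exact h; exact absurd h hDne
  have hc2 : c₂ = 0 := by rcases mul_eq_zero.mp h2 with h|h; exact h; exact absurd h hDne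
  refine ⟨?_, hc1, hc2⟩
  rw [hc1, hc2] at e1; linarith

private lemma L3' (c₀ c₁ c₂ x y z : ℝ) (hxy : x ≠ y) (hyz : y ≠ z) (hxz : x ≠ z)
    (d1 : |y - x| < 2*Real.pi) (d2 : |z - y| < 2*Real.pi) (d3 : |z - x| < 2*Real.pi)
    (e1 : c₀ + c₁*Real.cos x + c₂*Real.sin x = 0)
    (e2 : c₀ + c₁*Real.cos y + c₂*Real.sin y = 0)
    (e3 : c₀ + c₁*Real.cos z + c₂*Real.sin z = 0) :
    c₀ = 0 ∧ c₁ = 0 ∧ c₂ = 0 := by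
  have a1 := abs_lt.mp d1
  have a2 := abs_lt.mp d2
  have a3 := abs_lt.mp d3
  rcases lt_trichotomy x y with h1|h1|h1
  · rcases lt_trichotomy y z with h2|h2|h2
    · exact L3 c₀ c₁ c₂ x y z h1 h2 (by linarith [a3.2]) e1 e2 e3
    · exact absurd h2 hyz
    · rcases lt_trichotomy x z with h3|h3|h3
      · exact L3 c₀ c₁ c₂ x z y h3 h2 (by linarith [a1.2]) e1 e3 e2
      · exact absurd h3 hxz
      · exact L3 c₀ c₁ c₂ z x y h3 h1 (by linarith [a2.2]) e3 e1 e2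
  · exact absurd h1 hxy
  · rcases lt_trichotomy x z with h2|h2|h2
    · exact L3 c₀ c₁ c₂ y x z h1 h2 (by linarith [a2.2]) e2 e1 e3
    · exact absurd h2 hxz
    · rcases lt_trichotomy y z with h3|h3|h3
      · exact L3 c₀ c₁ c₂ y z x h3 h2 (by linarith [a1.1]) e2 e3 e1
      · exact absurd h3 hyz
      · exact L3 c₀ c₁ c₂ z y x h3 h1 (by linarith [a3.1]) e3 e2 e1

private lemma aux_d1 (c₀ c₁ c₂ : ℝ) :
    deriv (fun x => c₀ + c₁ * Real.cos x + c₂ * Real.sin x)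
      = fun x => -(c₁ * Real.sin x) + c₂ * Real.cos x := by
  funext x
  have h : HasDerivAt (fun x => c₀ + c₁ * Real.cos x + c₂ * Real.sin x)
      (-(c₁ * Real.sin x) + c₂ * Real.cos x) x := by
    have h1 := ((Real.hasDerivAt_cos x).const_mul c₁)
    have h2 := ((Real.hasDerivAt_sin x).const_mul c₂)
    have := ((hasDerivAt_const x c₀).add h1).add h2
    exact this.congr_deriv (by ring)
  exact h.deriv

private lemma aux_d2 (c₁ c₂ : ℝ) :
    deriv (fun x => -(c₁ * Real.sin x) + c₂ * Real.cos x)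
      = fun x => -(c₁ * Real.cos x) - c₂ * Real.sin x := by
  funext x
  have h : HasDerivAt (fun x => -(c₁ * Real.sin x) + c₂ * Real.cos x)
      (-(c₁ * Real.cos x) - c₂ * Real.sin x) x := by
    have h1 := ((Real.hasDerivAt_sin x).const_mul c₁).neg
    have h2 := ((Real.hasDerivAt_cos x).const_mul c₂)
    have := h1.add h2
    exact this.congr_deriv (by ring)
  exact h.deriv

theorem stmt_12 (a b : ℝ) (hab : a < b) (hlen : b - a < 2 * Real.pi)
    (c₀ c₁ c₂ : ℝ) (hc : ¬(c₀ = 0 ∧ c₁ = 0 ∧ c₂ = 0)) :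
    AtMostZeros 3 (Set.Icc a b) (fun x => c₀ + c₁ * Real.cos x + c₂ * Real.sin x) := by
  intro h τ μ hinj hmem hbound hsum hvan
  have E0 : ∀ j, c₀ + c₁*Real.cos (τ j) + c₂*Real.sin (τ j) = 0 := by
    intro j
    have := hvan j 0 (by have := (hbound j).1; omega)
    simpa [iteratedDeriv_zero] using this
  have E1 : ∀ j, 2 ≤ μ j → -(c₁*Real.sin (τ j)) + c₂*Real.cos (τ j) = 0 := by
    intro j hj
    have := hvan j 1 (by omega)
    rwa [iteratedDeriv_one, aux_d1] at this
  have E2 : ∀ j, 3 ≤ μ j → -(c₁*Real.cos (τ j)) - c₂*Real.sin (τ j) = 0 := by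
    intro j hj
    have := hvan j 2 (by omega)
    rwa [iteratedDeriv_succ, iteratedDeriv_one, aux_d1, aux_d2] at this
  have hdist : ∀ i j : Fin h, |τ j - τ i| < 2*Real.pi := by
    intro i j
    have hi := hmem i; have hj := hmem j
    rw [Set.mem_Icc] at hi hj
    rw [abs_sub_lt_iff]
    constructor <;> linarith [hi.1, hi.2, hj.1, hj.2]
  have hh : h ≤ 3 := by
    have h1 : (h : ℕ) = ∑ _j : Fin h, 1 := by simp
    have h2 : ∑ _j : Fin h, 1 ≤ ∑ j, μ j := Finset.sum_le_sum (fun j _ => (hbound j).1)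
    omega
  interval_cases h
  · simp at hsum
  · have hμ : μ 0 = 3 := by rwa [Fin.sum_univ_one] at hsum
    exact hc (L1 c₀ c₁ c₂ (τ 0) (E0 0) (E1 0 (by omega)) (E2 0 (by omega)))
  · rw [Fin.sum_univ_two] at hsum
    have hne : τ 0 ≠ τ 1 := fun he => absurd (hinj he) (by decide)
    have hb0 := hbound 0; have hb1 := hbound 1
    rcases (by omega : μ 0 = 2 ∧ μ 1 = 1 ∨ μ 0 = 1 ∧ μ 1 = 2) with ⟨h0,h1⟩|⟨h0,h1⟩
    · exact hc (L2 c₀ c₁ c₂ (τ 0) (τ 1) hne (hdist 0 1) (E0 0) (E1 0 (by omega)) (E0 1))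
    · exact hc (L2 c₀ c₁ c₂ (τ 1) (τ 0) hne.symm (hdist 1 0) (E0 1) (E1 1 (by omega)) (E0 0))
  · have hne01 : τ 0 ≠ τ 1 := fun he => absurd (hinj he) (by decide)
    have hne12 : τ 1 ≠ τ 2 := fun he => absurd (hinj he) (by decide)
    have hne02 : τ 0 ≠ τ 2 := fun he => absurd (hinj he) (by decide)
    exact hc (L3' c₀ c₁ c₂ (τ 0) (τ 1) (τ 2) hne01 hne12 hne02
      (hdist 0 1) (hdist 1 2) (hdist 0 2) (E0 0) (E0 1) (E0 2))
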